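/- Symmetric-difference parity argument: if M and N are matchings in a graph G with |N| > |M|, then the symmetric difference M △ N contains at least |N| - |M| vertex-disjoint M-augmenting paths. -/

import Mathlib

open SimpleGraph

variable {V : Type*}

/-- `M` is a matching in the simple graph `G`: a set of edges of `G` that are
pairwise vertex-disjoint. -/
def IsMatchingSet (G : SimpleGraph V) (M : Set (Sym2 V)) : Prop :=
  M ⊆ G.edgeSet ∧ ∀ v : V, {e | e ∈ M ∧ v ∈ e}.Subsingleton

/-- A vertex is free (unmatched) if no matching edge contains it. -/
def Unmatched (M : Set (Sym2 V)) (v : V) : Prop :=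
  ∀ e ∈ M, v ∉ e

/-- A walk is alternating w.r.t. `M` if its edges alternate non-matching /
matching, starting with a non-matching edge. -/
def IsAlternating (G : SimpleGraph V) (M : Set (Sym2 V)) {u v : V} (p : G.Walk u v) : Prop :=
  ∀ (i : ℕ) (h : i < p.edges.length), (p.edges.get ⟨i, h⟩ ∈ M ↔ Odd i)

/-- An `M`-augmenting path: a simple path of odd length, alternating starting
(and hence ending) with non-matching edges, whose two endpoints are free. -/
def IsAugPath (G : SimpleGraph V) (M : Set (Sym2 V)) {u v : V} (p : G.Walk u v) : Prop :=
  p.IsPath ∧ Odd p.length ∧ IsAlternating G M p ∧ Unmatched M u ∧ Unmatched M v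

/-- Length of a shortest even-length alternating simple path from a free vertex to `v`. -/
noncomputable def Lcp (G : SimpleGraph V) (M : Set (Sym2 V)) (v : V) : ℕ∞ :=
  sInf {n : ℕ∞ | ∃ (f : V) (p : G.Walk f v), Unmatched M f ∧ p.IsPath ∧
    IsAlternating G M p ∧ Even p.length ∧ (p.length : ℕ∞) = n}

/-- Length of a shortest odd-length alternating simple path from a free vertex to `v`. -/
noncomputable def LcpOdd (G : SimpleGraph V) (M : Set (Sym2 V)) (v : V) : ℕ∞ :=
  sInf {n : ℕ∞ | ∃ (f : V) (p : G.Walk f v), Unmatched M f ∧ p.IsPath ∧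
    IsAlternating G M p ∧ Odd p.length ∧ (p.length : ℕ∞) = n}

namespace AugAux
variable {G : SimpleGraph V} {M N : Set (Sym2 V)}

def AltB (M : Set (Sym2 V)) {G : SimpleGraph V} {u v : V} (p : G.Walk u v) (c : ℕ) : Prop :=
  ∀ (i : ℕ) (h : i < p.edges.length), (p.edges.get ⟨i, h⟩ ∈ M ↔ Odd (i + c))

lemma altB_zero_iff {u v : V} (p : G.Walk u v) :
    AltB M p 0 ↔ IsAlternating G M p := Iff.rfl

lemma altB_cons_iff {u a v : V} (h : G.Adj u a) (p : G.Walk a v) (c : ℕ) :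
    AltB M (Walk.cons h p) c ↔ ((s(u, a) ∈ M ↔ Odd c) ∧ AltB M p (c + 1)) := by
  constructor
  · intro H
    refine ⟨?_, fun i hi => ?_⟩
    · have := H 0 (by simp)
      simpa using this
    · have := H (i + 1) (by simpa using Nat.succ_lt_succ hi)
      rw [show i + 1 + c = i + (c + 1) by omega] at this
      simpa using this
  · rintro ⟨h0, H⟩ i hi
    match i with
    | 0 => simpa using h0
    | Nat.succ j =>
      have hj : j < p.edges.length := by simpa using Nat.lt_of_succ_lt_succ hi
      have := H j hj
      rw [show j + (c + 1) = j + 1 + c by omega] at this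
      simpa using this

lemma altB_concat {u v x : V} {p : G.Walk u v} (h : G.Adj v x) {c : ℕ}
    (hp : AltB M p c) (hlast : s(v, x) ∈ M ↔ Odd (p.length + c)) :
    AltB M (p.concat h) c := by
  intro i hi
  simp only [List.get_eq_getElem, Walk.edges_concat, List.concat_eq_append] at hi ⊢
  rcases lt_or_ge i p.edges.length with hlt | hge
  · rw [List.getElem_append_left hlt]
    simpa using hp i hlt
  · have hl := p.length_edges
    have hieq : i = p.edges.length := by simp at hi; omega
    subst hieq
    rw [List.getElem_append_right (le_refl _)]
    simpa [Walk.length_edges] using hlast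

lemma altB_reverse {u v : V} {p : G.Walk u v} (hp : AltB M p 0) (he : Even p.length) :
    AltB M p.reverse 1 := by
  intro i hi
  simp only [List.get_eq_getElem, Walk.edges_reverse] at hi ⊢
  have hi' : i < p.edges.length := by simpa using hi
  rw [List.getElem_reverse]
  have := hp (p.edges.length - 1 - i) (by omega)
  simp only [List.get_eq_getElem, Nat.add_zero] at this
  rw [this]
  rw [Walk.length_edges] at *
  rcases he with ⟨m, hm⟩
  simp only [Nat.odd_iff] at *
  omega


lemma edge_vertex_mem_support {u v x : V} {p : G.Walk u v} {e : Sym2 V}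
    (he : e ∈ p.edges) (hx : x ∈ e) : x ∈ p.support := by
  obtain ⟨y, rfl⟩ := Sym2.mem_iff_exists.mp hx
  exact p.fst_mem_support_of_mem_edges he

lemma exists_eq_cons {u v : V} (p : G.Walk u v) (hl : 0 < p.length) :
    ∃ (a : V) (h : G.Adj u a) (q : G.Walk a v), p = Walk.cons h q := by
  cases p with
  | nil => simp at hl
  | cons h q => exact ⟨_, h, q, rfl⟩

lemma exists_start_edge {u v : V} (p : G.Walk u v) (hl : 0 < p.length) :
    ∃ e ∈ p.edges, u ∈ e := by
  obtain ⟨a, h, q, rfl⟩ := exists_eq_cons p hl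
  refine ⟨s(u, a), ?_, ?_⟩ <;> simp

lemma exists_end_edge {u v : V} (p : G.Walk u v) (hl : 0 < p.length) :
    ∃ e ∈ p.edges, v ∈ e := by
  obtain ⟨e, he, hv⟩ := exists_start_edge p.reverse (by simpa using hl)
  rw [Walk.edges_reverse, List.mem_reverse] at he
  exact ⟨e, he, hv⟩

lemma mem_support_exists_edge {u v x : V} {p : G.Walk u v} (hl : 0 < p.length)
    (hx : x ∈ p.support) : ∃ e ∈ p.edges, x ∈ e := by
  induction p with
  | nil => simp at hl
  | @cons u b v h q ih =>
    rw [Walk.support_cons, List.mem_cons] at hx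
    rcases hx with rfl | hx
    · refine ⟨s(x, b), ?_, ?_⟩ <;> simp
    · rcases Nat.eq_zero_or_pos q.length with hq0 | hq0
      · have : q.support = [v] := by
          cases q with
          | nil => simp
          | cons _ _ => simp at hq0
        rw [this, List.mem_singleton] at hx
        subst hx
        obtain ⟨e, he, hv⟩ := exists_end_edge (Walk.cons h q) (by simp)
        exact ⟨e, he, hv⟩
      · obtain ⟨e, he, hxe⟩ := ih hq0 hx
        exact ⟨e, by rw [Walk.edges_cons]; exact List.mem_cons_of_mem _ he, hxe⟩

lemma end_color {u v : V} {p : G.Walk u v} {c : ℕ} (hp : p.IsPath) (halt : AltB M p c)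
    {e : Sym2 V} (he : e ∈ p.edges) (hv : v ∈ e) : (e ∈ M ↔ Odd (p.length - 1 + c)) := by
  induction p generalizing c with
  | nil => simp at he
  | @cons u b v h q ih =>
    rw [Walk.edges_cons, List.mem_cons] at he
    rw [Walk.cons_isPath_iff] at hp
    rw [altB_cons_iff] at halt
    rcases he with rfl | he
    · rcases Sym2.mem_iff.mp hv with rfl | rfl
      · exact absurd q.end_mem_support hp.2
      · have hq : q = Walk.nil := Walk.isPath_iff_eq_nil.mp hp.1
        subst hq
        simpa using halt.1
    · have hq1 : 0 < q.length := by
        cases q with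
        | nil => simp at he
        | cons _ _ => simp
      have hres := ih hp.1 halt.2 he hv
      rw [show q.length - 1 + (c + 1) = q.length + c from by omega] at hres
      rw [Walk.length_cons, Nat.add_sub_cancel]
      exact hres

lemma internal_cover {u v x : V} {p : G.Walk u v} {c : ℕ} (halt : AltB M p c)
    (hMN : ∀ e ∈ p.edges, e ∈ M ∪ N) (hx : x ∈ p.support) (hxu : x ≠ u) (hxv : x ≠ v) :
    (∃ e ∈ p.edges, e ∈ M ∧ x ∈ e) ∧ (∃ e ∈ p.edges, e ∈ N ∧ x ∈ e) := by
  induction p generalizing c with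
  | nil => simp at hx; exact absurd hx hxu
  | @cons u b v h q ih =>
    rw [Walk.support_cons, List.mem_cons] at hx
    rcases hx with rfl | hx
    · exact absurd rfl hxu
    rw [altB_cons_iff] at halt
    by_cases hxb : x = b
    · subst hxb
      cases q with
      | nil => exact absurd rfl hxv
      | @cons b b' v h' q' =>
        have h1 : (s(x, b') ∈ M ↔ Odd (c + 1)) := ((altB_cons_iff h' q' (c + 1)).mp halt.2).1
        have h0 := halt.1
        have hmem0 : s(u, x) ∈ (Walk.cons h (Walk.cons h' q')).edges := by simp
        have hmem1 : s(x, b') ∈ (Walk.cons h (Walk.cons h' q')).edges := by simp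
        have hxm0 : x ∈ s(u, x) := by simp
        have hxm1 : x ∈ s(x, b') := by simp
        by_cases hc : Odd c
        · refine ⟨⟨s(u, x), hmem0, h0.mpr hc, hxm0⟩, ⟨s(x, b'), hmem1, ?_, hxm1⟩⟩
          have hnm : s(x, b') ∉ M := by intro hm; have h2 := h1.mp hm; rw [Nat.odd_add_one] at h2; exact h2 hc
          rcases hMN _ hmem1 with hm | hn
          · exact absurd hm hnm
          · exact hn
        · refine ⟨⟨s(x, b'), hmem1, h1.mpr (by simpa [Nat.odd_add_one] using hc), hxm1⟩,
            ⟨s(u, x), hmem0, ?_, hxm0⟩⟩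
          have hnm : s(u, x) ∉ M := fun hm => hc (h0.mp hm)
          rcases hMN _ hmem0 with hm | hn
          · exact absurd hm hnm
          · exact hn
    · obtain ⟨⟨e1, he1, hm1, hx1⟩, ⟨e2, he2, hm2, hx2⟩⟩ :=
        ih halt.2 (fun e he => hMN e (by rw [Walk.edges_cons]; exact List.mem_cons_of_mem _ he)) hx hxb hxv
      refine ⟨⟨e1, ?_, hm1, hx1⟩, ⟨e2, ?_, hm2, hx2⟩⟩ <;>
        · rw [Walk.edges_cons]; first | exact List.mem_cons_of_mem _ he1 | exact List.mem_cons_of_mem _ he2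


/-- Determinism: two alternating paths from the same vertex with the same phase,
one support is a prefix of the other. -/
lemma det (hM : IsMatchingSet G M) (hN : IsMatchingSet G N) (hd : M ∩ N = ∅) :
    ∀ (c : ℕ) {w x₁ x₂ : V} (q₁ : G.Walk w x₁) (q₂ : G.Walk w x₂),
    AltB M q₁ c → AltB M q₂ c → (∀ e ∈ q₁.edges, e ∈ M ∪ N) → (∀ e ∈ q₂.edges, e ∈ M ∪ N) →
    q₁.support.IsPrefix q₂.support ∨ q₂.support.IsPrefix q₁.support := by
  intro c w x₁ x₂ q₁
  induction q₁ generalizing c x₂ with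
  | nil =>
    intro q₂ _ _ _ _
    left
    rw [Walk.support_nil]
    exact ⟨q₂.support.tail, (q₂.support_eq_cons).symm⟩
  | @cons w a x₁ h q₁' ih =>
    intro q₂ halt1 halt2 hE1 hE2
    cases q₂ with
    | nil =>
      right
      rw [Walk.support_nil, Walk.support_cons]
      exact ⟨a :: q₁'.support.tail, by rw [q₁'.support_eq_cons]; rfl⟩
    | @cons w b x₂ h2 q₂' =>
      rw [altB_cons_iff] at halt1 halt2
      have heq : s(w, a) = s(w, b) := by
        by_cases hc : Odd c
        · exact hM.2 w ⟨halt1.1.mpr hc, by simp⟩ ⟨halt2.1.mpr hc, by simp⟩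
        · have h1N : s(w, a) ∈ N := by
            rcases hE1 s(w, a) (by simp) with hm | hn
            · exact absurd (halt1.1.mp hm) hc
            · exact hn
          have h2N : s(w, b) ∈ N := by
            rcases hE2 s(w, b) (by simp) with hm | hn
            · exact absurd (halt2.1.mp hm) hc
            · exact hn
          exact hN.2 w ⟨h1N, by simp⟩ ⟨h2N, by simp⟩
      have hab : a = b := by
        rcases Sym2.eq_iff.mp heq with ⟨_, h'⟩ | ⟨h1, h2⟩
        · exact h'
        · exact absurd h2 h.ne'
      subst hab
      rcases ih (c + 1) q₂' halt1.2 halt2.2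
          (fun e he => hE1 e (by rw [Walk.edges_cons]; exact List.mem_cons_of_mem _ he))
          (fun e he => hE2 e (by rw [Walk.edges_cons]; exact List.mem_cons_of_mem _ he)) with hp | hp
      · left
        rw [Walk.support_cons, Walk.support_cons]
        exact List.cons_prefix_cons.mpr ⟨rfl, hp⟩
      · right
        rw [Walk.support_cons, Walk.support_cons]
        exact List.cons_prefix_cons.mpr ⟨rfl, hp⟩


lemma exists_start_edge_color {u v : V} {p : G.Walk u v} {c : ℕ} (hl : 0 < p.length)
    (halt : AltB M p c) : ∃ e ∈ p.edges, u ∈ e ∧ (e ∈ M ↔ Odd c) := by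
  obtain ⟨a, h, q, rfl⟩ := exists_eq_cons p hl
  rw [altB_cons_iff] at halt
  exact ⟨s(u, a), by simp, by simp, halt.1⟩

lemma length_pos_of_internal {u v x : V} {p : G.Walk u v} (hx : x ∈ p.support) (hxu : x ≠ u) :
    0 < p.length := by
  cases p with
  | nil => simp at hx; exact absurd hx hxu
  | cons _ _ => simp

lemma extend (hM : IsMatchingSet G M) (hN : IsMatchingSet G N)
    (hd : ∀ e, e ∈ M → e ∈ N → False) {u v : V} {p : G.Walk u v} (hp : p.IsPath)
    (halt : AltB M p 0) (hE : ∀ e ∈ p.edges, e ∈ M ∪ N) (hu : Unmatched M u)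
    {f : Sym2 V} (hf : f ∈ M ∪ N) (hvf : v ∈ f) (hcol : f ∈ M ↔ Odd p.length) :
    ∃ (x : V) (q : G.Walk u x), q.IsPath ∧ AltB M q 0 ∧ (∀ e ∈ q.edges, e ∈ M ∪ N) ∧
      q.length = p.length + 1 := by
  obtain ⟨x, rfl⟩ := Sym2.mem_iff_exists.mp hvf
  have hGf : s(v, x) ∈ G.edgeSet := by
    rcases hf with hm | hn
    · exact hM.1 hm
    · exact hN.1 hn
  have hadj : G.Adj v x := hGf
  have hxs : x ∉ p.support := by
    intro hxs
    by_cases hxu : x = u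
    · have hum : u ∈ s(v, x) := Sym2.mem_iff.mpr (Or.inr hxu.symm)
      rcases hf with hfM | hfN
      · exact hu s(v, x) hfM hum
      · have hnotM : s(v, x) ∉ M := fun hm => hd _ hm hfN
        have hnol : ¬ Odd p.length := fun ho => hnotM (hcol.mpr ho)
        rcases Nat.eq_zero_or_pos p.length with h0 | hpos
        · have huv : u = v := by
            cases p with
            | nil => rfl
            | cons _ _ => simp at h0
          exact hadj.ne' (hxu.trans huv)
        · obtain ⟨e0, he0, hue0, hcol0⟩ := exists_start_edge_color hpos halt
          have he0N : e0 ∈ N := by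
            rcases hE _ he0 with hm | hn
            · exact absurd (hcol0.mp hm) (by simp)
            · exact hn
          have hfe0 : s(v, x) = e0 := hN.2 u ⟨hfN, hum⟩ ⟨he0N, hue0⟩
          have hve0 : v ∈ e0 := hfe0 ▸ (by simp : v ∈ s(v, x))
          have := end_color hp halt he0 hve0
          have hne : e0 ∉ M := hfe0 ▸ hnotM
          rw [Nat.add_zero] at this
          have h1 : ¬ Odd (p.length - 1) := fun ho => hne (this.mpr ho)
          rw [Nat.odd_iff] at hnol h1
          omega
    · have hxv : x ≠ v := hadj.ne'
      have hpos : 0 < p.length := length_pos_of_internal hxs hxu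
      obtain ⟨⟨g, hgE, hgM, hxg⟩, ⟨g', hg'E, hg'N, hxg'⟩⟩ :=
        internal_cover (N := N) halt hE hxs hxu hxv
      rcases hf with hfM | hfN
      · have hfg : s(v, x) = g := hM.2 x ⟨hfM, by simp⟩ ⟨hgM, hxg⟩
        have hvg : v ∈ g := hfg ▸ (by simp : v ∈ s(v, x))
        have h1 := end_color hp halt hgE hvg
        rw [Nat.add_zero] at h1
        have h2 : Odd (p.length - 1) := h1.mp hgM
        have h3 : Odd p.length := hcol.mp hfM
        rw [Nat.odd_iff] at h2 h3
        omega
      · have hfg : s(v, x) = g' := hN.2 x ⟨hfN, by simp⟩ ⟨hg'N, hxg'⟩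
        have hvg : v ∈ g' := hfg ▸ (by simp : v ∈ s(v, x))
        have h1 := end_color hp halt hg'E hvg
        rw [Nat.add_zero] at h1
        have hg'notM : g' ∉ M := fun hm => hd _ hm hg'N
        have h2 : ¬ Odd (p.length - 1) := fun ho => hg'notM (h1.mpr ho)
        have h3 : ¬ Odd p.length := fun ho => hd _ (hcol.mpr ho) hfN
        rw [Nat.odd_iff] at h2 h3
        omega
  refine ⟨x, p.concat hadj, ?_, ?_, ?_, ?_⟩
  · rw [← Walk.isPath_reverse_iff, Walk.reverse_concat, Walk.cons_isPath_iff]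
    exact ⟨(Walk.isPath_reverse_iff p).mpr hp, by simpa [Walk.support_reverse] using hxs⟩
  · exact altB_concat hadj halt (by simpa using hcol)
  · intro e he
    rw [Walk.edges_concat, List.concat_eq_append, List.mem_append] at he
    rcases he with he | he
    · exact hE _ he
    · simp at he; subst he; exact hf
  · simp [Walk.length_concat]


open Finset in
lemma card_covered [Fintype V] [DecidableEq V] {F : Finset (Sym2 V)}
    (hF : IsMatchingSet G ↑F) [inst : DecidablePred (fun v : V => ∃ e ∈ F, v ∈ e)] :
    (univ.filter (fun v : V => ∃ e ∈ F, v ∈ e)).card = 2 * F.card := by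
  classical
  have hequ : univ.filter (fun v : V => ∃ e ∈ F, v ∈ e)
      = F.biUnion (fun e => univ.filter (fun v => v ∈ e)) := by
    ext v; simp
  rw [hequ, card_biUnion]
  · rw [Finset.sum_congr rfl (g := fun _ => 2), Finset.sum_const, smul_eq_mul, mul_comm]
    intro e he
    have hG : e ∈ G.edgeSet := hF.1 he
    induction e with
    | _ a b =>
      have hne : a ≠ b := by
        intro hab
        exact G.not_isDiag_of_mem_edgeSet hG (by simp [hab])
      have : univ.filter (fun v => v ∈ s(a, b)) = {a, b} := by
        ext v; simp [Sym2.mem_iff]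
      rw [this, card_pair hne]
  · intro e1 h1 e2 h2 hne
    simp only [Finset.disjoint_left, mem_filter]
    rintro v ⟨-, hv1⟩ ⟨-, hv2⟩
    exact hne (hF.2 v ⟨h1, hv1⟩ ⟨h2, hv2⟩)

lemma one_disjoint [Fintype V] [DecidableEq V] (G : SimpleGraph V) (MF NF : Finset (Sym2 V))
    (hM : IsMatchingSet G ↑MF) (hN : IsMatchingSet G ↑NF)
    (hd : ∀ e, e ∈ MF → e ∈ NF → False) (hcard : MF.card < NF.card) :
    ∃ (u x : V) (p : G.Walk u x), IsAugPath G ↑MF p ∧ ∀ e ∈ p.edges, e ∈ MF ∨ e ∈ NF := by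
  classical
  set M : Set (Sym2 V) := ↑MF with hMdef
  set N : Set (Sym2 V) := ↑NF with hNdef
  have hdS : ∀ e, e ∈ M → e ∈ N → False := fun e h1 h2 => hd e h1 h2
  set A : Finset V := Finset.univ.filter (fun v : V => ∃ e ∈ NF, v ∈ e) with hAdef
  set B : Finset V := Finset.univ.filter (fun v : V => ∃ e ∈ MF, v ∈ e) with hBdef
  have hAcard : A.card = 2 * NF.card := card_covered hN
  have hBcard : B.card = 2 * MF.card := card_covered hM
  by_cases hex : ∃ (u x : V) (p : G.Walk u x), IsAugPath G ↑MF p ∧ ∀ e ∈ p.edges, e ∈ MF ∨ e ∈ NF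
  · exact hex
  exfalso
  have hkey : ∀ u ∈ A \ B, ∃ (x : V) (p : G.Walk u x), p.IsPath ∧ AltB M p 0 ∧
      (∀ e ∈ p.edges, e ∈ M ∪ N) ∧ Even p.length ∧ 0 < p.length ∧ x ∈ B \ A := by
    intro u hu
    rw [Finset.mem_sdiff, hAdef, hBdef, Finset.mem_filter, Finset.mem_filter] at hu
    obtain ⟨⟨-, e0, he0, hue0⟩, hnB⟩ := hu
    have huM : Unmatched M u := by
      intro e heM hue
      exact hnB ⟨Finset.mem_univ u, e, heM, hue⟩
    set P : ℕ → Prop := fun n => ∃ (x : V) (p : G.Walk u x), p.IsPath ∧ AltB M p 0 ∧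
      (∀ e ∈ p.edges, e ∈ M ∪ N) ∧ p.length = n with hPdef
    have hP0 : P 0 := ⟨u, Walk.nil, by simp, fun i hi => by simp at hi, by simp, rfl⟩
    have hbdd : ∀ n, P n → n ≤ Fintype.card V := by
      rintro n ⟨x, p, hp, -, -, rfl⟩
      exact le_of_lt hp.length_lt
    set n0 : ℕ := Nat.findGreatest P (Fintype.card V) with hn0def
    have hPn0 : P n0 := Nat.findGreatest_spec (Nat.zero_le _) hP0
    have hmax : ∀ n, P n → n ≤ n0 := fun n hn => Nat.le_findGreatest (hbdd n hn) hn
    obtain ⟨x, p, hp, halt, hE, hlen⟩ := hPn0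
    have hpos : 0 < p.length := by
      rcases Nat.eq_zero_or_pos p.length with h0 | h
      · exfalso
        have hxu : x = u := by
          cases p with
          | nil => rfl
          | cons _ _ => simp at h0
        subst hxu
        obtain ⟨y, hey⟩ := Sym2.mem_iff_exists.mp hue0
        subst hey
        have hadj : G.Adj x y := hN.1 he0
        have hP1 : P 1 := by
          refine ⟨y, Walk.cons hadj Walk.nil, ?_, ?_, ?_, by simp⟩
          · rw [Walk.cons_isPath_iff]
            exact ⟨by simp, by simp [hadj.ne]⟩
          · rw [altB_cons_iff]
            refine ⟨⟨fun hm => (hdS _ hm he0).elim, fun h => absurd h (by simp)⟩,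
              fun i hi => by simp at hi⟩
          · intro e he
            simp only [Walk.edges_cons, Walk.edges_nil, List.mem_singleton] at he
            subst he
            exact Or.inr he0
        have := hmax 1 hP1
        omega
      · exact h
    rcases Nat.even_or_odd p.length with heven | hodd
    · refine ⟨x, p, hp, halt, hE, heven, hpos, ?_⟩
      rw [Finset.mem_sdiff, hAdef, hBdef, Finset.mem_filter, Finset.mem_filter]
      constructor
      · obtain ⟨elast, hel, hxel⟩ := exists_end_edge p hpos
        have hcl := end_color hp halt hel hxel
        rw [Nat.add_zero] at hcl
        have : elast ∈ M := by
          rw [hcl, Nat.odd_iff]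
          rcases heven with ⟨m, hm⟩
          omega
        exact ⟨Finset.mem_univ x, elast, this, hxel⟩
      · rintro ⟨-, f, hfN, hxf⟩
        have hfcol : f ∈ M ↔ Odd p.length := by
          constructor
          · intro hm; exact (hdS _ hm hfN).elim
          · intro ho
            exfalso
            rw [Nat.odd_iff] at ho
            rcases heven with ⟨m, hm⟩
            omega
        obtain ⟨x', q, hq, haltq, hEq, hlq⟩ :=
          extend hM hN hdS hp halt hE huM (Or.inr hfN) hxf hfcol
        have := hmax (p.length + 1) ⟨x', q, hq, haltq, hEq, hlq⟩
        omega
    · exfalso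
      have hxM : Unmatched M x := by
        intro f hfM hxf
        obtain ⟨x', q, hq, haltq, hEq, hlq⟩ :=
          extend hM hN hdS hp halt hE huM (Or.inl hfM) hxf (iff_of_true hfM hodd)
        have := hmax (p.length + 1) ⟨x', q, hq, haltq, hEq, hlq⟩
        omega
      refine hex ⟨u, x, p, ⟨hp, hodd, (altB_zero_iff p).mp halt, huM, hxM⟩, ?_⟩
      intro e he
      have := hE e he
      simpa [hMdef, hNdef] using this
  choose xf pf hpf haltf hEf hevenf hposf hBAf using hkey
  have hcardlt : (B \ A).card < (A \ B).card := by
    have h1 := Finset.card_sdiff_add_card_inter A B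
    have h2 := Finset.card_sdiff_add_card_inter B A
    rw [Finset.inter_comm B A] at h2
    omega
  set F : V → V := fun u => if h : u ∈ A \ B then xf u h else u with hFdef
  have hmaps : ∀ u ∈ A \ B, F u ∈ B \ A := by
    intro u hu
    rw [hFdef]; simp only [dif_pos hu]
    exact hBAf u hu
  obtain ⟨u1, h1, u2, h2, hne, hfeq⟩ :=
    Finset.exists_ne_map_eq_of_card_lt_of_maps_to hcardlt hmaps
  rw [hFdef] at hfeq
  simp only [dif_pos h1, dif_pos h2] at hfeq
  have main : ∀ (a b w1 w2 : V), a ≠ b → a ∉ B → b ∉ B → w1 ∈ B → (hw : w2 = w1) →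
      ∀ (p1 : G.Walk a w1) (p2 : G.Walk b w2), AltB M p1 0 → AltB M p2 0 →
      (∀ e ∈ p1.edges, e ∈ M ∪ N) → (∀ e ∈ p2.edges, e ∈ M ∪ N) →
      Even p1.length → Even p2.length → False := by
    intro a b w1 w2 hab haB hbB hwB hw p1 p2 halt1 halt2 hE1 hE2 hev1 hev2
    subst hw
    have hrev1 : AltB M p1.reverse 1 := altB_reverse halt1 hev1
    have hrev2 : AltB M p2.reverse 1 := altB_reverse halt2 hev2
    have hE1' : ∀ e ∈ p1.reverse.edges, e ∈ M ∪ N := by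
      intro e he; rw [Walk.edges_reverse, List.mem_reverse] at he; exact hE1 e he
    have hE2' : ∀ e ∈ p2.reverse.edges, e ∈ M ∪ N := by
      intro e he; rw [Walk.edges_reverse, List.mem_reverse] at he; exact hE2 e he
    have hMN : M ∩ N = ∅ := by
      ext e
      simp only [Set.mem_inter_iff, Set.mem_empty_iff_false, iff_false, not_and]
      exact fun hm hn => (hdS e hm hn).elim
    have hdet := det hM hN hMN 1 p1.reverse p2.reverse hrev1 hrev2 hE1' hE2'
    have hsub : (a ∈ p2.support ∧ a ≠ b) ∨ (b ∈ p1.support ∧ b ≠ a) := by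
      rcases hdet with hpre | hpre
      · left
        refine ⟨?_, hab⟩
        have ha : a ∈ p1.reverse.support := by
          rw [Walk.support_reverse, List.mem_reverse]
          exact p1.start_mem_support
        have := hpre.subset ha
        rwa [Walk.support_reverse, List.mem_reverse] at this
      · right
        refine ⟨?_, hab.symm⟩
        have hb : b ∈ p2.reverse.support := by
          rw [Walk.support_reverse, List.mem_reverse]
          exact p2.start_mem_support
        have := hpre.subset hb
        rwa [Walk.support_reverse, List.mem_reverse] at this
    have hcover : ∀ (cV : V), cV ∉ B →
        (cV ∈ p1.support ∧ cV ≠ a) ∨ (cV ∈ p2.support ∧ cV ≠ b) → False := by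
      intro cV hcB hcmem
      have hcw : cV ≠ w2 := by
        intro h'
        rw [h'] at hcB
        exact hcB hwB
      rcases hcmem with ⟨hc1, hca⟩ | ⟨hc2, hcb⟩
      · obtain ⟨⟨g, hgE, hgM, hg⟩, -⟩ := internal_cover (N := N) halt1 hE1 hc1 hca hcw
        exact hcB (by rw [hBdef, Finset.mem_filter]; exact ⟨Finset.mem_univ cV, g, hgM, hg⟩)
      · obtain ⟨⟨g, hgE, hgM, hg⟩, -⟩ := internal_cover (N := N) halt2 hE2 hc2 hcb hcw
        exact hcB (by rw [hBdef, Finset.mem_filter]; exact ⟨Finset.mem_univ cV, g, hgM, hg⟩)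
    rcases hsub with ⟨ha2, hab'⟩ | ⟨hb1, hba'⟩
    · exact hcover a haB (Or.inr ⟨ha2, hab'⟩)
    · exact hcover b hbB (Or.inl ⟨hb1, hba'⟩)
  have hu1B : u1 ∉ B := (Finset.mem_sdiff.mp h1).2
  have hu2B : u2 ∉ B := (Finset.mem_sdiff.mp h2).2
  have hwB : xf u1 h1 ∈ B := (Finset.mem_sdiff.mp (hBAf u1 h1)).1
  exact main u1 u2 (xf u1 h1) (xf u2 h2) hne hu1B hu2B hwB hfeq.symm
    (pf u1 h1) (pf u2 h2) (haltf u1 h1) (haltf u2 h2) (hEf u1 h1) (hEf u2 h2)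
    (hevenf u1 h1) (hevenf u2 h2)


lemma matching_subset {S T : Finset (Sym2 V)} (hsub : S ⊆ T) (hT : IsMatchingSet G ↑T) :
    IsMatchingSet G ↑S := by
  refine ⟨fun e he => hT.1 (by exact_mod_cast hsub (by exact_mod_cast he)), fun v => ?_⟩
  intro e1 he1 e2 he2
  exact hT.2 v ⟨by exact_mod_cast hsub (by exact_mod_cast he1.1), he1.2⟩
    ⟨by exact_mod_cast hsub (by exact_mod_cast he2.1), he2.2⟩

lemma one_general [Fintype V] [DecidableEq V] (G : SimpleGraph V) (MF NF : Finset (Sym2 V))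
    (hM : IsMatchingSet G ↑MF) (hN : IsMatchingSet G ↑NF) (hcard : MF.card < NF.card) :
    ∃ (u x : V) (p : G.Walk u x), IsAugPath G ↑MF p ∧ ∀ e ∈ p.edges, e ∈ symmDiff MF NF := by
  classical
  set M0 : Finset (Sym2 V) := MF \ NF with hM0
  set N0 : Finset (Sym2 V) := NF \ MF with hN0
  have hM0m : IsMatchingSet G ↑M0 := matching_subset (Finset.sdiff_subset) hM
  have hN0m : IsMatchingSet G ↑N0 := matching_subset (Finset.sdiff_subset) hN
  have hd0 : ∀ e, e ∈ M0 → e ∈ N0 → False := by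
    intro e h1 h2
    rw [hM0, Finset.mem_sdiff] at h1
    rw [hN0, Finset.mem_sdiff] at h2
    exact h2.2 h1.1
  have hc0 : M0.card < N0.card := by
    rw [hM0, hN0]
    have h1 := Finset.card_sdiff_add_card_inter MF NF
    have h2 := Finset.card_sdiff_add_card_inter NF MF
    rw [Finset.inter_comm NF MF] at h2
    omega
  obtain ⟨u, x, p, ⟨hp, hodd, haltI, huU, hxU⟩, hedges⟩ :=
    one_disjoint G M0 N0 hM0m hN0m hd0 hc0
  have halt : AltB (↑M0) p 0 := (altB_zero_iff p).mpr haltI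
  have hpos : 0 < p.length := by
    rcases Nat.eq_zero_or_pos p.length with h0 | h
    · rw [h0] at hodd; exact absurd hodd (by simp)
    · exact h
  have hEun : ∀ e ∈ p.edges, e ∈ (↑M0 : Set (Sym2 V)) ∪ ↑N0 := by
    intro e he
    rcases hedges e he with hm | hn
    · exact Or.inl (by exact_mod_cast hm)
    · exact Or.inr (by exact_mod_cast hn)
  have hsymm : ∀ e ∈ p.edges, e ∈ symmDiff MF NF := by
    intro e he
    rw [Finset.mem_symmDiff]
    rcases hedges e he with hm | hn
    · rw [hM0, Finset.mem_sdiff] at hm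
      exact Or.inl hm
    · rw [hN0, Finset.mem_sdiff] at hn
      exact Or.inr hn
  have hMiff : ∀ e ∈ p.edges, (e ∈ MF ↔ e ∈ M0) := by
    intro e he
    constructor
    · intro hmf
      rcases hedges e he with hm | hn
      · exact hm
      · rw [hN0, Finset.mem_sdiff] at hn
        exact absurd hmf hn.2
    · intro hm
      rw [hM0, Finset.mem_sdiff] at hm
      exact hm.1
  -- endpoints have an N0-edge on the path
  have hendN : ∀ (y : V), (∃ e ∈ p.edges, y ∈ e ∧ e ∈ N0) → Unmatched ↑M0 y →
      Unmatched ↑MF y := by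
    rintro y ⟨e0, he0, hye0, he0N⟩ hyM0 f hf hyf
    have hfMF : f ∈ MF := hf
    by_cases hfN : f ∈ NF
    · have he0NF : e0 ∈ NF := by
        rw [hN0, Finset.mem_sdiff] at he0N
        exact he0N.1
      have : f = e0 := hN.2 y ⟨by exact_mod_cast hfN, hyf⟩ ⟨by exact_mod_cast he0NF, hye0⟩
      subst this
      rw [hN0, Finset.mem_sdiff] at he0N
      exact he0N.2 hfMF
    · have : f ∈ M0 := by
        rw [hM0, Finset.mem_sdiff]
        exact ⟨hfMF, hfN⟩
      exact hyM0 f (by exact_mod_cast this) hyf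
  obtain ⟨e0, he0, hue0, hcol0⟩ := exists_start_edge_color hpos halt
  have he0N0 : e0 ∈ N0 := by
    have : e0 ∉ (↑M0 : Set (Sym2 V)) := by
      intro hm
      have h2 := hcol0.mp hm
      simp at h2
    rcases hedges e0 he0 with hm | hn
    · exact absurd (by exact_mod_cast hm) this
    · exact hn
  obtain ⟨el, hel, hxel⟩ := exists_end_edge p hpos
  have helN0 : el ∈ N0 := by
    have hcl := end_color hp halt hel hxel
    rw [Nat.add_zero] at hcl
    have : el ∉ (↑M0 : Set (Sym2 V)) := by
      intro hm
      have h2 := hcl.mp hm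
      rw [Nat.odd_iff] at h2 hodd
      omega
    rcases hedges el hel with hm | hn
    · exact absurd (by exact_mod_cast hm) this
    · exact hn
  refine ⟨u, x, p, ⟨hp, hodd, ?_, hendN u ⟨e0, he0, hue0, he0N0⟩ huU,
    hendN x ⟨el, hel, hxel, helN0⟩ hxU⟩, hsymm⟩
  intro i hi
  have hmem : p.edges.get ⟨i, hi⟩ ∈ p.edges := p.edges.get_mem _
  have h1 := halt i hi
  rw [Nat.add_zero] at h1
  rw [← h1]
  constructor
  · intro hmf
    exact_mod_cast (hMiff _ hmem).mp (by exact_mod_cast hmf)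
  · intro hm0
    exact_mod_cast (hMiff _ hmem).mpr (by exact_mod_cast hm0)

lemma count_edges [DecidableEq V] {MF NF : Finset (Sym2 V)} {u v : V} {p : G.Walk u v} :
    ∀ {c : ℕ}, AltB (↑MF) p c → (∀ e ∈ p.edges, (e ∈ NF ↔ e ∉ MF)) →
    (p.edges.filter (fun e => e ∈ MF)).length = (p.length + if Odd c then 1 else 0) / 2 ∧
    (p.edges.filter (fun e => e ∈ NF)).length = (p.length + if Odd c then 0 else 1) / 2 := by
  induction p with
  | nil =>
    intro c _ _
    constructor <;> by_cases hc : Odd c <;> simp [hc]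
  | @cons u a v h q ih =>
    intro c halt hiff
    rw [altB_cons_iff] at halt
    obtain ⟨hqm, hqn⟩ := ih halt.2
      (fun e he => hiff e (by simp only [Walk.edges_cons]; exact List.mem_cons_of_mem _ he))
    have hfirst := hiff s(u, a) (by simp)
    rw [Walk.edges_cons, Walk.length_cons]
    by_cases hc : Odd c
    · have hm : s(u, a) ∈ MF := by exact_mod_cast halt.1.mpr hc
      have hn : s(u, a) ∉ NF := fun hh => (hfirst.mp hh) hm
      have hc1 : ¬ Odd (c + 1) := by rw [Nat.odd_add_one]; exact fun hh => hh hc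
      rw [if_neg hc1] at hqm hqn
      refine ⟨?_, ?_⟩
      · rw [List.filter_cons_of_pos (by simpa using hm), if_pos hc, List.length_cons, hqm]
        omega
      · rw [List.filter_cons_of_neg (by simpa using hn), if_pos hc, hqn]
    · have hm : s(u, a) ∉ MF := fun hh => hc (halt.1.mp (by exact_mod_cast hh))
      have hn : s(u, a) ∈ NF := hfirst.mpr hm
      have hc1 : Odd (c + 1) := by rw [Nat.odd_add_one]; exact hc
      rw [if_pos hc1] at hqm hqn
      refine ⟨?_, ?_⟩
      · rw [List.filter_cons_of_neg (by simpa using hm), if_neg hc, hqm]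
      · rw [List.filter_cons_of_pos (by simpa using hn), if_neg hc, List.length_cons, hqn]
        omega


lemma key [Fintype V] [DecidableEq V] (G : SimpleGraph V) :
    ∀ (k : ℕ) (MF NF : Finset (Sym2 V)), IsMatchingSet G ↑MF → IsMatchingSet G ↑NF →
    NF.card - MF.card = k →
    ∃ P : Fin k → Σ (u : V) (x : V), G.Walk u x,
      (∀ i, IsAugPath G ↑MF (P i).2.2) ∧
      (∀ i, ∀ e ∈ (P i).2.2.edges, e ∈ symmDiff MF NF) ∧
      (∀ i j, i ≠ j → ∀ y ∈ (P i).2.2.support, y ∉ (P j).2.2.support) := by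
  intro k
  induction k with
  | zero =>
    intro MF NF _ _ _
    exact ⟨Fin.elim0, fun i => i.elim0, fun i => i.elim0, fun i => i.elim0⟩
  | succ k ih =>
    intro MF NF hM hN hk
    classical
    have hcard : MF.card < NF.card := by omega
    obtain ⟨u, x, p, haug, hedges⟩ := one_general G MF NF hM hN hcard
    obtain ⟨hp, hodd, haltI, huU, hxU⟩ := haug
    have halt : AltB (↑MF) p 0 := (altB_zero_iff p).mpr haltI
    have hpos : 0 < p.length := by rcases hodd with ⟨m, hm⟩; omega
    have hEun : ∀ e ∈ p.edges, e ∈ (↑MF : Set (Sym2 V)) ∪ ↑NF := by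
      intro e he
      rcases Finset.mem_symmDiff.mp (hedges e he) with ⟨h1, -⟩ | ⟨h1, -⟩
      · exact Or.inl (by exact_mod_cast h1)
      · exact Or.inr (by exact_mod_cast h1)
    set E : Finset (Sym2 V) := p.edges.toFinset with hEdef
    have htouchM : ∀ e ∈ MF, ∀ y ∈ e, y ∈ p.support → e ∈ p.edges := by
      intro e heM y hye hys
      by_cases hyu : y = u
      · exact absurd (hyu ▸ hye) (huU e (by exact_mod_cast heM))
      by_cases hyx : y = x
      · exact absurd (hyx ▸ hye) (hxU e (by exact_mod_cast heM))
      obtain ⟨⟨g, hg, hgM, hyg⟩, -⟩ := internal_cover (N := ↑NF) halt hEun hys hyu hyx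
      have : e = g := hM.2 y ⟨by exact_mod_cast heM, hye⟩ ⟨hgM, hyg⟩
      rwa [this]
    have htouchN : ∀ e ∈ NF, ∀ y ∈ e, y ∈ p.support → e ∈ p.edges := by
      intro e heN y hye hys
      by_cases hyu : y = u
      · subst hyu
        obtain ⟨e0, he0, hye0, hcol0⟩ := exists_start_edge_color hpos halt
        have he0N : e0 ∈ NF := by
          have h1 : e0 ∉ (↑MF : Set (Sym2 V)) := by
            intro hm
            have h2 := hcol0.mp hm
            simp at h2
          rcases hEun e0 he0 with hm | hn
          · exact absurd hm h1
          · exact_mod_cast hn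
        have : e = e0 := hN.2 y ⟨by exact_mod_cast heN, hye⟩ ⟨by exact_mod_cast he0N, hye0⟩
        rwa [this]
      by_cases hyx : y = x
      · subst hyx
        obtain ⟨el, hel, hxel⟩ := exists_end_edge p hpos
        have helN : el ∈ NF := by
          have hcl := end_color hp halt hel hxel
          rw [Nat.add_zero] at hcl
          have h1 : el ∉ (↑MF : Set (Sym2 V)) := by
            intro hm
            have h2 := hcl.mp hm
            rw [Nat.odd_iff] at h2 hodd
            omega
          rcases hEun el hel with hm | hn
          · exact absurd hm h1
          · exact_mod_cast hn
        have : e = el := hN.2 y ⟨by exact_mod_cast heN, hye⟩ ⟨by exact_mod_cast helN, hxel⟩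
        rwa [this]
      obtain ⟨-, ⟨g, hg, hgN, hyg⟩⟩ := internal_cover (N := ↑NF) halt hEun hys hyu hyx
      have : e = g := hN.2 y ⟨by exact_mod_cast heN, hye⟩ ⟨hgN, hyg⟩
      rwa [this]
    have hiffNM : ∀ e ∈ p.edges, (e ∈ NF ↔ e ∉ MF) := by
      intro e he
      rcases Finset.mem_symmDiff.mp (hedges e he) with ⟨h1, h2⟩ | ⟨h1, h2⟩
      · exact ⟨fun hn => absurd hn h2, fun hm => absurd h1 hm⟩
      · exact ⟨fun _ => h2, fun _ => h1⟩
    obtain ⟨hcM, hcN⟩ := count_edges halt hiffNM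
    rw [if_neg (by simp)] at hcM hcN
    have hnd : p.edges.Nodup := hp.isTrail.edges_nodup
    have hMEcard : (MF ∩ E).card = p.length / 2 := by
      have h1 : MF ∩ E = (p.edges.filter (fun e => e ∈ MF)).toFinset := by
        ext e
        simp only [Finset.mem_inter, hEdef, List.mem_toFinset, List.mem_filter, decide_eq_true_eq]
        tauto
      rw [h1, List.toFinset_card_of_nodup (hnd.filter _), hcM, Nat.add_zero]
    have hNEcard : (NF ∩ E).card = (p.length + 1) / 2 := by
      have h1 : NF ∩ E = (p.edges.filter (fun e => e ∈ NF)).toFinset := by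
        ext e
        simp only [Finset.mem_inter, hEdef, List.mem_toFinset, List.mem_filter, decide_eq_true_eq]
        tauto
      rw [h1, List.toFinset_card_of_nodup (hnd.filter _), hcN]
    set M' : Finset (Sym2 V) := MF \ E with hM'def
    set N' : Finset (Sym2 V) := NF \ E with hN'def
    have hM' : IsMatchingSet G ↑M' := matching_subset Finset.sdiff_subset hM
    have hN' : IsMatchingSet G ↑N' := matching_subset Finset.sdiff_subset hN
    have hM'card : M'.card = MF.card - (MF ∩ E).card := by
      rw [hM'def, ← Finset.sdiff_inter_self_left MF E,
        Finset.card_sdiff_of_subset Finset.inter_subset_left]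
    have hN'card : N'.card = NF.card - (NF ∩ E).card := by
      rw [hN'def, ← Finset.sdiff_inter_self_left NF E,
        Finset.card_sdiff_of_subset Finset.inter_subset_left]
    have hMle : (MF ∩ E).card ≤ MF.card := Finset.card_le_card Finset.inter_subset_left
    have hNle : (NF ∩ E).card ≤ NF.card := Finset.card_le_card Finset.inter_subset_left
    have hk' : N'.card - M'.card = k := by
      rw [Nat.odd_iff] at hodd
      omega
    obtain ⟨P', hP1, hP2, hP3⟩ := ih M' N' hM' hN' hk'
    have hdisj : ∀ i, ∀ y ∈ (P' i).2.2.support, y ∉ p.support := by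
      intro i y hy hyp
      have hql : 0 < (P' i).2.2.length := by
        rcases (hP1 i).2.1 with ⟨m, hm⟩
        omega
      obtain ⟨e, he, hye⟩ := mem_support_exists_edge hql hy
      have he2 := hP2 i e he
      rcases Finset.mem_symmDiff.mp he2 with ⟨h1, -⟩ | ⟨h1, -⟩
      · rw [hM'def, Finset.mem_sdiff] at h1
        exact h1.2 (by rw [hEdef, List.mem_toFinset]; exact htouchM e h1.1 y hye hyp)
      · rw [hN'def, Finset.mem_sdiff] at h1
        exact h1.2 (by rw [hEdef, List.mem_toFinset]; exact htouchN e h1.1 y hye hyp)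
    have hlift : ∀ i, IsAugPath G ↑MF (P' i).2.2 ∧
        (∀ e ∈ (P' i).2.2.edges, e ∈ symmDiff MF NF) := by
      intro i
      obtain ⟨hq, hqodd, hqalt, hqu, hqx⟩ := hP1 i
      have hiffM : ∀ e ∈ (P' i).2.2.edges, (e ∈ M' ↔ e ∈ MF) := by
        intro e he
        constructor
        · intro h1
          exact (Finset.mem_sdiff.mp (hM'def ▸ h1)).1
        · intro h1
          rw [hM'def, Finset.mem_sdiff]
          refine ⟨h1, fun hE' => ?_⟩
          have heP : e ∈ p.edges := by rwa [hEdef, List.mem_toFinset] at hE'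
          exact hdisj i e.out.1 (edge_vertex_mem_support he (Sym2.out_fst_mem e))
            (edge_vertex_mem_support heP (Sym2.out_fst_mem e))
      refine ⟨⟨hq, hqodd, ?_, ?_, ?_⟩, ?_⟩
      · intro i2 hi2
        have h1 := hqalt i2 hi2
        have hmem : (P' i).2.2.edges.get ⟨i2, hi2⟩ ∈ (P' i).2.2.edges :=
          List.get_mem _ _
        rw [← h1]
        constructor
        · intro hmf
          exact_mod_cast (hiffM _ hmem).mpr (by exact_mod_cast hmf)
        · intro hm'
          exact_mod_cast (hiffM _ hmem).mp (by exact_mod_cast hm')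
      · intro f hf hyf
        by_cases hfE : f ∈ E
        · have heP : f ∈ p.edges := by rwa [hEdef, List.mem_toFinset] at hfE
          exact hdisj i (P' i).1 (P' i).2.2.start_mem_support
            (edge_vertex_mem_support heP hyf)
        · exact hqu f (by exact_mod_cast Finset.mem_sdiff.mpr ⟨(by exact_mod_cast hf), hfE⟩) hyf
      · intro f hf hyf
        by_cases hfE : f ∈ E
        · have heP : f ∈ p.edges := by rwa [hEdef, List.mem_toFinset] at hfE
          exact hdisj i (P' i).2.1 (P' i).2.2.end_mem_support
            (edge_vertex_mem_support heP hyf)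
        · exact hqx f (by exact_mod_cast Finset.mem_sdiff.mpr ⟨(by exact_mod_cast hf), hfE⟩) hyf
      · intro e he
        have he2 := hP2 i e he
        rw [Finset.mem_symmDiff] at he2 ⊢
        rcases he2 with ⟨h1, h2⟩ | ⟨h1, h2⟩
        · rw [hM'def, Finset.mem_sdiff] at h1
          refine Or.inl ⟨h1.1, fun hn => h2 ?_⟩
          rw [hN'def, Finset.mem_sdiff]
          exact ⟨hn, h1.2⟩
        · rw [hN'def, Finset.mem_sdiff] at h1
          refine Or.inr ⟨h1.1, fun hm => h2 ?_⟩
          rw [hM'def, Finset.mem_sdiff]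
          exact ⟨hm, h1.2⟩
    refine ⟨Fin.cons ⟨u, x, p⟩ P', ?_, ?_, ?_⟩
    · intro i
      refine Fin.cases ?_ (fun j => ?_) i
      · try simp only [Fin.cons_zero]
        exact ⟨hp, hodd, haltI, huU, hxU⟩
      · try simp only [Fin.cons_succ]
        exact (hlift j).1
    · intro i
      refine Fin.cases ?_ (fun j => ?_) i
      · try simp only [Fin.cons_zero]
        exact hedges
      · try simp only [Fin.cons_succ]
        exact (hlift j).2
    · intro i j
      refine Fin.cases ?_ (fun i' => ?_) i
      · refine Fin.cases ?_ (fun j' => ?_) j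
        · intro hij
          exact absurd rfl hij
        · intro hij y hyi hyj
          try simp only [Fin.cons_zero] at hyi
          try simp only [Fin.cons_succ] at hyj
          exact hdisj j' y hyj hyi
      · refine Fin.cases ?_ (fun j' => ?_) j
        · intro hij y hyi hyj
          try simp only [Fin.cons_succ] at hyi
          try simp only [Fin.cons_zero] at hyj
          exact hdisj i' y hyi hyj
        · intro hij y hyi hyj
          try simp only [Fin.cons_succ] at hyi hyj
          exact hP3 i' j' (fun hh => hij (by rw [hh])) y hyi hyj
end AugAux

/-- if `M` and `N` are matchings with `|N| > |M|`, then `M △ N` contains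
at least `|N| - |M|` vertex-disjoint `M`-augmenting paths. -/
theorem symmDiff_augmenting_paths [Fintype V] [DecidableEq V] (G : SimpleGraph V)
    (M N : Finset (Sym2 V)) (hM : IsMatchingSet G ↑M) (hN : IsMatchingSet G ↑N)
    (hcard : M.card < N.card) :
    ∃ P : Fin (N.card - M.card) → Σ (u : V) (v : V), G.Walk u v,
      (∀ i, IsAugPath G ↑M (P i).2.2) ∧
      (∀ i, ∀ e ∈ (P i).2.2.edges, e ∈ symmDiff M N) ∧
      (∀ i j, i ≠ j → ∀ x ∈ (P i).2.2.support, x ∉ (P j).2.2.support) := by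
  exact AugAux.key G (N.card - M.card) M N hM hN rfl
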